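/- Let n be odd, and suppose Td ∈ ℚ[x₁,…,x_n] symmetric is the Todd polynomial in n variables. If c₁ = Σ x_i is sent to 0 (i.e. c₁ is torsion), then the degree-n component of the Todd class, as a polynomial in the elementary symmetric functions, is divisible by e₁ = c₁; hence Td_n vanishes when c₁ = 0. -/

import Mathlib

open Finset MvPolynomial

open PowerSeries in
private lemma exp_sub_one_ne : (exp ℚ - 1 : PowerSeries ℚ) ≠ 0 := by
  intro h
  have := congrArg (PowerSeries.coeff 1) h
  simp [coeff_exp, PowerSeries.coeff_one] at this

open PowerSeries in
private lemma rescale_neg_one_X : rescale (-1 : ℚ) (PowerSeries.X : PowerSeries ℚ) = -PowerSeries.X := by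
  ext n
  simp only [coeff_rescale, PowerSeries.coeff_X, map_neg]
  rcases eq_or_ne n 1 with h | h <;> simp [h]

open PowerSeries in
private lemma exp_mul_exp_neg :
    (exp ℚ) * rescale (-1 : ℚ) (exp ℚ) = 1 := by
  have := exp_mul_exp_eq_exp_add (1 : ℚ) (-1)
  simp only [rescale_one, RingHom.id_apply, add_neg_cancel] at this
  rw [this, rescale_zero]
  simp [constantCoeff_exp]

open PowerSeries in
private lemma rescale_neg_one_bernoulli' :
    rescale (-1 : ℚ) (bernoulli'PowerSeries ℚ)
      = bernoulli'PowerSeries ℚ * rescale (-1 : ℚ) (exp ℚ) := by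
  have key := bernoulli'PowerSeries_mul_exp_sub_one ℚ
  apply mul_right_cancel₀ exp_sub_one_ne
  have h1 : (bernoulli'PowerSeries ℚ * rescale (-1 : ℚ) (exp ℚ)) * (exp ℚ - 1) = PowerSeries.X := by
    calc (bernoulli'PowerSeries ℚ * rescale (-1 : ℚ) (exp ℚ)) * (exp ℚ - 1)
        = (bernoulli'PowerSeries ℚ * (exp ℚ - 1)) * rescale (-1 : ℚ) (exp ℚ) := by ring
      _ = PowerSeries.X * (exp ℚ * rescale (-1 : ℚ) (exp ℚ)) := by rw [key]; ring
      _ = PowerSeries.X := by rw [exp_mul_exp_neg, mul_one]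
  have h2 : rescale (-1 : ℚ) (bernoulli'PowerSeries ℚ) * (exp ℚ - 1) = PowerSeries.X := by
    have := congrArg (rescale (-1 : ℚ)) key
    simp only [map_mul, map_sub, map_one, rescale_neg_one_X] at this
    
    have h3 := congrArg (· * exp ℚ) this
    try simp only at h3
    have h4 : rescale (-1 : ℚ) (exp ℚ) * exp ℚ = 1 := by
      rw [mul_comm]; exact exp_mul_exp_neg
    calc rescale (-1 : ℚ) (bernoulli'PowerSeries ℚ) * (exp ℚ - 1)
        = -(rescale (-1 : ℚ) (bernoulli'PowerSeries ℚ)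
            * (rescale (-1 : ℚ) (exp ℚ) - 1) * exp ℚ)
          + rescale (-1 : ℚ) (bernoulli'PowerSeries ℚ)
            * (rescale (-1 : ℚ) (exp ℚ) * exp ℚ - 1) := by ring
      _ = -(-PowerSeries.X * rescale (-1 : ℚ) (exp ℚ) * exp ℚ) + 0 := by rw [this, h4]; ring
      _ = PowerSeries.X := by rw [mul_assoc, h4]; ring
  rw [h1, h2]

open PowerSeries in
private lemma odd_coeff_zero {n : ℕ} (hn : Odd n) {p : PowerSeries ℚ}
    (hp : rescale (-1 : ℚ) p = p) : PowerSeries.coeff n p = 0 := by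
  have := congrArg (PowerSeries.coeff n) hp
  rw [coeff_rescale, hn.neg_one_pow] at this
  linarith

open PowerSeries in
private lemma prod_rescale_exp {m : ℕ} (a : Fin m → ℚ) (s : Finset (Fin m)) :
    ∏ i ∈ s, rescale (a i) (exp ℚ) = rescale (∑ i ∈ s, a i) (exp ℚ) := by
  induction s using Finset.induction with
  | empty => simp [rescale_zero, constantCoeff_exp]
  | insert _ _ h ih =>
      rw [Finset.prod_insert h, Finset.sum_insert h, ih, exp_mul_exp_eq_exp_add]

open PowerSeries in
private lemma even_prod {n : ℕ} (a : Fin n → ℚ) (ha : ∑ i, a i = 0) :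
    rescale (-1 : ℚ) (∏ i, rescale (a i) (bernoulli'PowerSeries ℚ))
      = ∏ i, rescale (a i) (bernoulli'PowerSeries ℚ) := by
  rw [map_prod]
  have h1 : ∀ i : Fin n, rescale (-1 : ℚ) (rescale (a i) (bernoulli'PowerSeries ℚ))
      = rescale (a i) (bernoulli'PowerSeries ℚ) * rescale (-(a i)) (exp ℚ) := by
    intro i
    rw [rescale_rescale, mul_comm (a i) (-1 : ℚ), ← rescale_rescale,
      rescale_neg_one_bernoulli', map_mul, rescale_rescale, mul_comm (-1 : ℚ) (a i)]
    norm_num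
  calc ∏ i, rescale (-1 : ℚ) (rescale (a i) (bernoulli'PowerSeries ℚ))
      = ∏ i, (rescale (a i) (bernoulli'PowerSeries ℚ) * rescale (-(a i)) (exp ℚ)) := by
        exact Finset.prod_congr rfl fun i _ => h1 i
    _ = (∏ i, rescale (a i) (bernoulli'PowerSeries ℚ)) * ∏ i, rescale (-(a i)) (exp ℚ) := by
        rw [Finset.prod_mul_distrib]
    _ = ∏ i, rescale (a i) (bernoulli'PowerSeries ℚ) := by
        have h0 : ∑ i : Fin n, -a i = 0 := by
          rw [Finset.sum_neg_distrib, ha, neg_zero]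
        rw [prod_rescale_exp, h0, rescale_zero]
        simp [constantCoeff_exp]

open PowerSeries in
private lemma eval_Td {n : ℕ} (Td : MvPolynomial (Fin n) ℚ)
    (hTd : ∀ d : Fin n →₀ ℕ,
      MvPolynomial.coeff d Td =
        if (d.sum fun _ k => k) = n then
          ∏ i, bernoulli' (d i) / ((Nat.factorial (d i)) : ℚ)
        else 0) (a : Fin n → ℚ) :
    MvPolynomial.eval a Td
      = PowerSeries.coeff n (∏ i, rescale (a i) (bernoulli'PowerSeries ℚ)) := by
  rw [PowerSeries.coeff_prod, MvPolynomial.eval_eq']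
  have hsum : ∀ d : Fin n →₀ ℕ, (d.sum fun _ k => k) = ∑ i, d i := fun d =>
    Finsupp.sum_fintype _ _ (fun _ => rfl)
  have hsub : Td.support ⊆ Finset.finsuppAntidiag Finset.univ n := by
    intro d hd
    rw [Finset.mem_finsuppAntidiag]
    refine ⟨?_, Finset.subset_univ _⟩
    by_contra h
    have h' : (d.sum fun _ k => k) ≠ n := by rwa [hsum]
    exact MvPolynomial.mem_support_iff.mp hd (by rw [hTd d, if_neg h'])
  rw [Finset.sum_subset hsub (fun d _ hd => by
    rw [MvPolynomial.notMem_support_iff.mp hd, zero_mul])]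
  apply Finset.sum_congr rfl
  intro d hd
  rw [Finset.mem_finsuppAntidiag] at hd
  rw [hTd d, if_pos (by rw [hsum]; exact hd.1)]
  rw [← Finset.prod_mul_distrib]
  apply Finset.prod_congr rfl
  intro i _
  rw [coeff_rescale, bernoulli'PowerSeries, PowerSeries.coeff_mk]
  simp only [Algebra.algebraMap_self, RingHom.id_apply]
  ring

private lemma eval_Td_zero {n : ℕ} (hn : Odd n) (Td : MvPolynomial (Fin n) ℚ)
    (hTd : ∀ d : Fin n →₀ ℕ,
      MvPolynomial.coeff d Td =
        if (d.sum fun _ k => k) = n then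
          ∏ i, bernoulli' (d i) / ((Nat.factorial (d i)) : ℚ)
        else 0) (a : Fin n → ℚ) (ha : ∑ i, a i = 0) :
    MvPolynomial.eval a Td = 0 := by
  rw [eval_Td Td hTd a]
  exact odd_coeff_zero hn (even_prod a ha)

/-- The degree-`n` homogeneous component of the Todd class
`∏ i, x i / (1 - exp (- x i))`, as a polynomial in the variables `x i`:
its coefficient at a monomial `d` of total degree `n` is
`∏ i, bernoulli' (d i) / (d i)!`, and all other coefficients vanish. -/
theorem stmt15 (n : ℕ) (hn : Odd n) (Td : MvPolynomial (Fin n) ℚ)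
    (hTd : ∀ d : Fin n →₀ ℕ,
      MvPolynomial.coeff d Td =
        if (d.sum fun _ k => k) = n then
          ∏ i, bernoulli' (d i) / ((Nat.factorial (d i)) : ℚ)
        else 0) :
    Td ∈ Ideal.span ({∑ i, (X i : MvPolynomial (Fin n) ℚ)} : Set (MvPolynomial (Fin n) ℚ)) := by
  rw [Ideal.mem_span_singleton]
  obtain ⟨m, rfl⟩ : ∃ m, n = m + 1 := by
    rcases n with _ | m
    · exact absurd hn (by simp)
    · exact ⟨m, rfl⟩
  -- pass through finSuccEquiv
  set e := MvPolynomial.finSuccEquiv ℚ m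
  set c : MvPolynomial (Fin m) ℚ := ∑ i, X i
  have hL : e (∑ i, (X i : MvPolynomial (Fin (m + 1)) ℚ))
      = Polynomial.X - Polynomial.C (-c) := by
    rw [map_sum, Fin.sum_univ_succ, finSuccEquiv_X_zero, map_neg, sub_neg_eq_add]
    congr 1
    calc ∑ i : Fin m, e (X i.succ) = ∑ i : Fin m, Polynomial.C (X i) :=
          Finset.sum_congr rfl fun i _ => finSuccEquiv_X_succ
      _ = Polynomial.C c := (map_sum Polynomial.C _ _).symm
  have hroot : Polynomial.eval (-c) (e Td) = 0 := by
    apply MvPolynomial.funext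
    intro y
    have hc : MvPolynomial.eval y (-c) = -(∑ i, y i) := by simp [c]
    have key : MvPolynomial.eval y (Polynomial.eval (-c) (e Td))
        = MvPolynomial.eval (Fin.cons (-(∑ i, y i)) y) Td := by
      rw [eval_eq_eval_mv_eval', Polynomial.eval_map, ← hc, Polynomial.eval₂_at_apply]
    rw [key, map_zero]
    apply eval_Td_zero hn Td hTd
    rw [Fin.sum_univ_succ, Fin.cons_zero]
    simp [Fin.cons_succ]
  have hdvd : e (∑ i, (X i : MvPolynomial (Fin (m + 1)) ℚ)) ∣ e Td := by
    rw [hL, Polynomial.dvd_iff_isRoot]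
    exact hroot
  obtain ⟨q, hq⟩ := hdvd
  refine ⟨e.symm q, ?_⟩
  have := congrArg e.symm hq
  rw [AlgEquiv.symm_apply_apply, map_mul, AlgEquiv.symm_apply_apply] at this
  exact this
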